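/- Let n ≥ 1, x > 0 and w ≥ 0, and let v ∈ Λ(w) be such that v_i ≤ x for every 1 ≤ i ≤ n and v_i + v_{i+1} ≥ x for every 1 ≤ i ≤ n−1. Then f(v) = n·x − w; in particular, by the general lower bound f ≥ n·x − w on Λ(w), such a v minimizes f over Λ(w). -/

import Mathlib

open Finset

/-- `f v = Σ_{1 ≤ l ≤ k ≤ n} (x − Σ_{i=l}^{k} v_i)⁺` (0-indexed over `Fin n`). -/
noncomputable def f (n : ℕ) (x : ℝ) (v : Fin n → ℝ) : ℝ :=
  ∑ l : Fin n, ∑ k : Fin n,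
    if l ≤ k then max (x - ∑ i ∈ Finset.Icc l k, v i) 0 else 0

/-- `Λ(w)`: nonnegative vectors with coordinate sum `w`. -/
def Lambda (n : ℕ) (w : ℝ) : Set (Fin n → ℝ) :=
  {v | (∀ i, 0 ≤ v i) ∧ ∑ i, v i = w}

lemma lower_bound (n : ℕ) (x w : ℝ) (u : Fin n → ℝ) (hu : u ∈ Lambda n w) :
    (n : ℝ) * x - w ≤ f n x u := by
  obtain ⟨hnn, hs⟩ := hu
  have h1 : ∑ l : Fin n, (x - u l) ≤ f n x u := by
    unfold f
    refine Finset.sum_le_sum fun l _ => ?_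
    calc x - u l ≤ (if l ≤ l then max (x - ∑ i ∈ Finset.Icc l l, u i) 0 else 0) := by
          simp [Finset.Icc_self, le_max_left]
      _ ≤ ∑ k : Fin n, if l ≤ k then max (x - ∑ i ∈ Finset.Icc l k, u i) 0 else 0 := by
          refine Finset.single_le_sum
            (f := fun k => if l ≤ k then max (x - ∑ i ∈ Finset.Icc l k, u i) 0 else 0)
            (fun k _ => ?_) (Finset.mem_univ l)
          split
          · exact le_max_right _ _
          · exact le_refl _
  calc (n : ℝ) * x - w = ∑ l : Fin n, (x - u l) := by
        rw [Finset.sum_sub_distrib, hs, Finset.sum_const, Finset.card_univ,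
          Fintype.card_fin, nsmul_eq_mul]
    _ ≤ f n x u := h1

/-- If `v ∈ Λ(w)` has all coordinates `≤ x` and all adjacent pairs summing to `≥ x`,
then `f(v) = n·x − w`; in particular `v` minimizes `f` over `Λ(w)`. -/
theorem statement7 (n : ℕ) (hn : 1 ≤ n) (x w : ℝ) (hx : 0 < x) (hw : 0 ≤ w)
    (v : Fin n → ℝ) (hv : v ∈ Lambda n w)
    (hle : ∀ i, v i ≤ x)
    (hadj : ∀ i : Fin n, ∀ h : (i : ℕ) + 1 < n, x ≤ v i + v ⟨(i : ℕ) + 1, h⟩) :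
    f n x v = (n : ℝ) * x - w ∧ ∀ u ∈ Lambda n w, f n x v ≤ f n x u := by
  obtain ⟨hnn, hs⟩ := hv
  have heq : f n x v = (n : ℝ) * x - w := by
    unfold f
    have hrow : ∀ l : Fin n,
        (∑ k : Fin n, if l ≤ k then max (x - ∑ i ∈ Finset.Icc l k, v i) 0 else 0)
          = x - v l := by
      intro l
      rw [Finset.sum_eq_single l]
      · simp [Finset.Icc_self, max_eq_left (sub_nonneg.mpr (hle l))]
      · intro k _ hkl
        split
        · rename_i hlk
          have hlt : (l : ℕ) < (k : ℕ) := lt_of_le_of_ne hlk (by simpa [Fin.ext_iff] using Ne.symm hkl)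
          have hln : (l : ℕ) + 1 < n := lt_of_le_of_lt hlt k.isLt
          set l' : Fin n := ⟨(l : ℕ) + 1, hln⟩ with hl'
          have hne : l ≠ l' := by
            simp [hl', Fin.ext_iff]
          have hsub : ({l, l'} : Finset (Fin n)) ⊆ Finset.Icc l k := by
            intro i hi
            rcases Finset.mem_insert.mp hi with h | h
            · subst h; exact Finset.mem_Icc.mpr ⟨le_refl _, hlk⟩
            · rw [Finset.mem_singleton] at h; subst h
              exact Finset.mem_Icc.mpr ⟨by simp [Fin.le_def, hl'], by
                simp [Fin.le_def, hl']; omega⟩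
          have hle' : v l + v l' ≤ ∑ i ∈ Finset.Icc l k, v i := by
            have := Finset.sum_le_sum_of_subset_of_nonneg hsub (fun i _ _ => hnn i)
            rwa [Finset.sum_pair hne] at this
          have hxle : x ≤ ∑ i ∈ Finset.Icc l k, v i :=
            le_trans (hadj l hln) hle'
          exact max_eq_right (sub_nonpos.mpr hxle)
        · rfl
      · intro h; exact absurd (Finset.mem_univ l) h
    rw [Finset.sum_congr rfl (fun l _ => hrow l), Finset.sum_sub_distrib, hs,
      Finset.sum_const, Finset.card_univ, Fintype.card_fin, nsmul_eq_mul]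
  exact ⟨heq, fun u hu => heq ▸ lower_bound n x w u hu⟩
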